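/- Let t ≥ 27, k ∈ {t-1,t}, and let y ≥ t+k+5 with y ≡ t+k-1 (mod 2). Suppose g is an integer with g_{t,k} + g(y,t,k) ≤ g ≤ -1 + g_{t+1,k+1} + g(t+k+7,t+1,k+1). Then (y+1)² ≤ 20t², i.e. y ≤ √20·t - 1. -/
import Mathlib


def bin3 (n : ℤ) : ℤ := n*(n-1)*(n-2)/6
def dtk (t k : ℤ) : ℤ := t*(t+1)/2 + k*(k+1)/2
def gtk (t k : ℤ) : ℤ := 2 + t*(t+1)*(2*t-5)/6 + k*(k+1)*(2*k-5)/6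
def cc (s t k : ℤ) : ℤ := Int.fdiv (bin3 (s+3) - s * dtk t k - 6 - 3*(s-t-k-1)/2 + gtk t k) (s-1)
def dd (s t k : ℤ) : ℤ := bin3 (s+3) - s * dtk t k - 6 - 3*(s-t-k-1)/2 + gtk t k - (s-1) * cc s t k
def gg (s t k : ℤ) : ℤ := cc s t k - 3 - 3*(s-t-k-1)/2

lemma two_dvd_consec (n : ℤ) : (2:ℤ) ∣ n*(n+1) := (Int.even_mul_succ_self n).two_dvd

lemma three_dvd_g (n : ℤ) : (3:ℤ) ∣ n*(n+1)*(2*n-5) := by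
  obtain ⟨q, r, hr, hn⟩ : ∃ q r, (r = 0 ∨ r = 1 ∨ r = 2) ∧ n = 3*q + r :=
    ⟨n/3, n%3, by omega, by omega⟩
  rcases hr with rfl | rfl | rfl <;> subst hn
  · exact ⟨q*(3*q+1)*(6*q-5), by ring⟩
  · exact ⟨(3*q+1)*(3*q+2)*(2*q-1), by ring⟩
  · exact ⟨(3*q+2)*(q+1)*(6*q-1), by ring⟩

lemma six_dvd_g (n : ℤ) : (6:ℤ) ∣ n*(n+1)*(2*n-5) := by
  have h2 : (2:ℤ) ∣ n*(n+1)*(2*n-5) := Dvd.dvd.mul_right (two_dvd_consec n) _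
  have h3 := three_dvd_g n
  omega

lemma three_dvd_consec3 (n : ℤ) : (3:ℤ) ∣ n*(n+1)*(n+2) := by
  obtain ⟨q, r, hr, hn⟩ : ∃ q r, (r = 0 ∨ r = 1 ∨ r = 2) ∧ n = 3*q + r :=
    ⟨n/3, n%3, by omega, by omega⟩
  rcases hr with rfl | rfl | rfl <;> subst hn
  · exact ⟨q*(3*q+1)*(3*q+2), by ring⟩
  · exact ⟨(3*q+1)*(3*q+2)*(q+1), by ring⟩
  · exact ⟨(3*q+2)*(q+1)*(3*q+4), by ring⟩

lemma six_dvd_consec3 (n : ℤ) : (6:ℤ) ∣ n*(n+1)*(n+2) := by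
  have h2 : (2:ℤ) ∣ n*(n+1)*(n+2) := Dvd.dvd.mul_right (two_dvd_consec n) _
  have h3 := three_dvd_consec3 n
  omega

set_option maxHeartbeats 1000000 in
theorem stmt17 (t k y g : ℤ) (ht : 27 ≤ t) (hk : k = t - 1 ∨ k = t)
    (hy : t + k + 5 ≤ y) (hpar : (2:ℤ) ∣ (y - (t+k-1)))
    (hg1 : gtk t k + gg y t k ≤ g)
    (hg2 : g ≤ -1 + gtk (t+1) (k+1) + gg (t+k+7) (t+1) (k+1)) :
    (y+1)^2 ≤ 20 * t^2 := by
  by_contra hcon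
  push_neg at hcon
  have hk1 : t - 1 ≤ k := by rcases hk with h | h <;> omega
  have hk2 : k ≤ t := by rcases hk with h | h <;> omega
  obtain ⟨p, hp⟩ : ∃ p, y - t - k - 1 = 2*p := ⟨(y-t-k-1)/2, by omega⟩
  obtain ⟨u, hu⟩ := two_dvd_consec t
  obtain ⟨v, hv⟩ := two_dvd_consec k
  obtain ⟨u2, hu2⟩ := two_dvd_consec (t+1)
  obtain ⟨v2, hv2⟩ := two_dvd_consec (k+1)
  obtain ⟨a1, ha1⟩ := six_dvd_g t
  obtain ⟨a2, ha2⟩ := six_dvd_g k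
  obtain ⟨a3, ha3⟩ := six_dvd_g (t+1)
  obtain ⟨a4, ha4⟩ := six_dvd_g (k+1)
  obtain ⟨b1, hb1⟩ := six_dvd_consec3 (y+1)
  obtain ⟨b2, hb2⟩ := six_dvd_consec3 (t+k+8)
  -- basic component equalities
  have egtk : gtk t k = 2 + a1 + a2 := by
    unfold gtk; rw [ha1, ha2]; omega
  have egtk2 : gtk (t+1) (k+1) = 2 + a3 + a4 := by
    unfold gtk; rw [ha3, ha4]; omega
  have edtk : dtk t k = u + v := by
    unfold dtk; rw [hu, hv]; omega
  have edtk2 : dtk (t+1) (k+1) = u2 + v2 := by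
    unfold dtk; rw [hu2, hv2]; omega
  have ebin1 : bin3 (y+3) = b1 := by
    unfold bin3
    have h : (y+3)*(y+3-1)*(y+3-2) = 6*b1 := by linear_combination hb1
    rw [h]; exact Int.mul_ediv_cancel_left _ (by norm_num)
  have ebin2 : bin3 (t+k+7+3) = b2 := by
    unfold bin3
    have h : (t+k+7+3)*(t+k+7+3-1)*(t+k+7+3-2) = 6*b2 := by linear_combination hb2
    rw [h]; exact Int.mul_ediv_cancel_left _ (by norm_num)
  have ep1 : 3*(y-t-k-1)/2 = 3*p := by omega
  have ep2 : 3*(t+k+7-(t+1)-(k+1)-1)/2 = 6 := by omega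
  -- cc as euclidean division
  have ecc1 : cc y t k = (b1 - y*(u+v) - 6 - 3*p + (2+a1+a2)) / (y-1) := by
    unfold cc
    rw [Int.fdiv_eq_ediv_of_nonneg _ (by omega), ebin1, edtk, egtk, ep1]
  have ecc2 : cc (t+k+7) (t+1) (k+1)
      = (b2 - (t+k+7)*(u2+v2) - 6 - 6 + (2+a3+a4)) / (t+k+7-1) := by
    unfold cc
    rw [Int.fdiv_eq_ediv_of_nonneg _ (by omega), ebin2, edtk2, egtk2, ep2]
  set M1 : ℤ := b1 - y*(u+v) - 6 - 3*p + (2+a1+a2) with hM1def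
  set M2 : ℤ := b2 - (t+k+7)*(u2+v2) - 6 - 6 + (2+a3+a4) with hM2def
  set c1 : ℤ := M1 / (y-1) with hc1def
  set c2 : ℤ := M2 / (t+k+7-1) with hc2def
  set r1 : ℤ := M1 % (y-1) with hr1def
  set r2 : ℤ := M2 % (t+k+7-1) with hr2def
  have hdiv1 : (y-1) * c1 + r1 = M1 := Int.mul_ediv_add_emod _ _
  have hdiv2 : (t+k+7-1) * c2 + r2 = M2 := Int.mul_ediv_add_emod _ _
  have hr1a : 0 ≤ r1 := Int.emod_nonneg _ (by omega)
  have hr1b : r1 < y - 1 := Int.emod_lt_of_pos _ (by omega)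
  have hr2a : 0 ≤ r2 := Int.emod_nonneg _ (by omega)
  -- gg equalities
  have egg1 : gg y t k = c1 - 3 - 3*p := by
    unfold gg; rw [ecc1, ep1]
  have egg2 : gg (t+k+7) (t+1) (k+1) = c2 - 3 - 6 := by
    unfold gg; rw [ecc2, ep2]
  rw [egg1, egtk] at hg1
  rw [egg2, egtk2] at hg2
  have hkey : c1 ≤ c2 + (a3 + a4) - (a1 + a2) + 3*p - 7 := by linarith
  -- multiply up
  have s1 : (y-1) * c1 ≤ (y-1) * (c2 + (a3 + a4) - (a1 + a2) + 3*p - 7) :=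
    mul_le_mul_of_nonneg_left hkey (by omega)
  have s2 : (t+k+6) * ((y-1) * c1) ≤ (t+k+6) * ((y-1) * (c2 + (a3 + a4) - (a1 + a2) + 3*p - 7)) :=
    mul_le_mul_of_nonneg_left s1 (by omega)
  have e1 : (y-1) * c1 = M1 - r1 := by linarith
  have e2 : (t+k+6) * c2 = M2 - r2 := by linarith
  rw [e1] at s2
  have expand : (t+k+6) * ((y-1) * (c2 + (a3 + a4) - (a1 + a2) + 3*p - 7))
      = (y-1) * ((t+k+6) * c2) + (y-1) * ((t+k+6) * ((a3 + a4) - (a1 + a2) + 3*p - 7)) := by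
    ring
  rw [expand, e2] at s2
  -- now s2 is in terms of M1, M2, a's, p, r1, r2
  -- premultiplied witness equalities
  have hb1m : (t+k+6) * ((y+1)*(y+1+1)*(y+1+2)) = (t+k+6) * (6*b1) := by rw [hb1]
  have hum : (t+k+6) * (y * (t*(t+1))) = (t+k+6) * (y * (2*u)) := by rw [hu]
  have hvm : (t+k+6) * (y * (k*(k+1))) = (t+k+6) * (y * (2*v)) := by rw [hv]
  have ha1m : (t+k+6) * (t*(t+1)*(2*t-5)) = (t+k+6) * (6*a1) := by rw [ha1]
  have ha2m : (t+k+6) * (k*(k+1)*(2*k-5)) = (t+k+6) * (6*a2) := by rw [ha2]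
  have hb2m : (y-1) * ((t+k+8)*(t+k+8+1)*(t+k+8+2)) = (y-1) * (6*b2) := by rw [hb2]
  have hu2m : (y-1) * ((t+k+7) * ((t+1)*(t+1+1))) = (y-1) * ((t+k+7) * (2*u2)) := by rw [hu2]
  have hv2m : (y-1) * ((t+k+7) * ((k+1)*(k+1+1))) = (y-1) * ((t+k+7) * (2*v2)) := by rw [hv2]
  have ha3m : (y-1) * ((t+1)*(t+1+1)*(2*(t+1)-5)) = (y-1) * (6*a3) := by rw [ha3]
  have ha4m : (y-1) * ((k+1)*(k+1+1)*(2*(k+1)-5)) = (y-1) * (6*a4) := by rw [ha4]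
  have ha1e : (y-1) * ((t+k+6) * (t*(t+1)*(2*t-5))) = (y-1) * ((t+k+6) * (6*a1)) := by rw [ha1]
  have ha2e : (y-1) * ((t+k+6) * (k*(k+1)*(2*k-5))) = (y-1) * ((t+k+6) * (6*a2)) := by rw [ha2]
  have ha3e : (y-1) * ((t+k+6) * ((t+1)*(t+1+1)*(2*(t+1)-5))) = (y-1) * ((t+k+6) * (6*a3)) := by
    rw [ha3]
  have ha4e : (y-1) * ((t+k+6) * ((k+1)*(k+1+1)*(2*(k+1)-5))) = (y-1) * ((t+k+6) * (6*a4)) := by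
    rw [ha4]
  -- reduce to a purely polynomial inequality in t, k, y, p, r1, r2
  have hfin : (t+k+6) * (((y+1)*(y+1+1)*(y+1+2) - 3*(y*(t*(t+1))) - 3*(y*(k*(k+1)))
        - 24 - 18*p + t*(t+1)*(2*t-5) + k*(k+1)*(2*k-5)) - 6*r1)
      ≤ (y-1) * (((t+k+8)*(t+k+8+1)*(t+k+8+2)
          - 3*((t+k+7)*((t+1)*(t+1+1))) - 3*((t+k+7)*((k+1)*(k+1+1)))
          - 60 + (t+1)*(t+1+1)*(2*(t+1)-5) + (k+1)*(k+1+1)*(2*(k+1)-5)) - 6*r2)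
        + (y-1) * ((t+k+6) * ((t+1)*(t+1+1)*(2*(t+1)-5) + (k+1)*(k+1+1)*(2*(k+1)-5)
          - t*(t+1)*(2*t-5) - k*(k+1)*(2*k-5) + 18*p - 42)) := by
    rw [hM1def, hM2def] at s2
    linarith [s2, hb1m, hum, hvm, ha1m, ha2m, hb2m, hu2m, hv2m, ha3m, ha4m,
      ha1e, ha2e, ha3e, ha4e]
  -- final contradiction
  have hr1c : r1 ≤ y - 2 := by omega
  have ht0 : (0:ℤ) ≤ t := by omega
  have hy0 : (0:ℤ) ≤ y := by omega
  have hA : (0:ℤ) ≤ (y+1)^2 - 20*t^2 - 1 := by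
    have := Int.lt_iff_add_one_le.mp hcon; linarith
  have hC : (0:ℤ) ≤ t - 27 := by omega
  have hrm1 : (t+k+6)*r1 ≤ (t+k+6)*(y-2) := mul_le_mul_of_nonneg_left hr1c (by omega)
  have hrm2 : (0:ℤ) ≤ (y-1)*r2 := mul_nonneg (by omega) hr2a
  have hpm1 : (y-1)*((t+k+6)*(y-t-k-1)) = (y-1)*((t+k+6)*(2*p)) := by rw [hp]
  have hpm2 : (t+k+6)*(y-t-k-1) = (t+k+6)*(2*p) := by rw [hp]
  have hB : (0:ℤ) ≤ y - 2*t - 4 := by omega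
  rcases hk with hkk | hkk <;> subst hkk <;>
    linarith [hfin, hrm1, hrm2, hpm1, hpm2, hA, hB, hC,
      mul_nonneg (mul_nonneg ht0 hy0) hA,
      mul_nonneg hy0 hA, mul_nonneg ht0 hA,
      mul_nonneg (mul_nonneg hy0 hy0) hB,
      mul_nonneg hy0 hB,
      mul_nonneg (mul_nonneg ht0 hy0) hB,
      mul_nonneg (mul_nonneg (mul_nonneg ht0 ht0) hy0) hC,
      mul_nonneg (mul_nonneg ht0 ht0) hB,
      mul_nonneg ht0 hB,
      mul_nonneg (mul_nonneg (mul_nonneg ht0 ht0) ht0) hC,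
      mul_nonneg (mul_nonneg ht0 ht0) hC,
      mul_nonneg ht0 hC,
      mul_nonneg (mul_nonneg ht0 hy0) hC,
      mul_nonneg hy0 hC]
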